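/- Set x = j ∘ i ∈ End(W), F_l = ker( B_{l−1,l} ∘ ⋯ ∘ B_{1,2} ∘ i ) for 1 ≤ l ≤ n−1, F_0 = 0. Fix 2 ≤ k ≤ n−1, let S ⊆ V_k be a subspace with S ⊆ ker B_{k,k−1} ∩ ker B_{k,k+1} (with the conventions B_{n−1,n} = 0 and interpreting ker B_{k,k+1} = V_k when k = n−1), let p : V_k → V_k/S be the canonical projection, and set F′_k = ker( p ∘ B_{k−1,k} ∘ ⋯ ∘ B_{1,2} ∘ i ). Then F_k ⊆ F′_k ⊆ x^{−1}(F_{k−1}). -/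
import Mathlib


noncomputable section

variable (V : ℕ → Type*) [∀ k, AddCommGroup (V k)] [∀ k, Module ℂ (V k)]

/-- The ascending composite `B_{l-1,l} ∘ ⋯ ∘ B_{1,2} : V 1 →ₗ V l` (the identity for
`l = 1`), where `Bup k : V (k-1) → V k` is the map `B_{k-1,k}`. -/
def asc (Bup : ∀ k, V (k - 1) →ₗ[ℂ] V k) : (l : ℕ) → (V 1 →ₗ[ℂ] V l)
  | 0 => 0
  | 1 => LinearMap.id
  | l + 2 => (Bup (l + 2)).comp (asc Bup (l + 1))

theorem asc_comp_ij
    (n : ℕ)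
    (W : Type*) [AddCommGroup W] [Module ℂ W]
    (Bdown : ∀ k, V k →ₗ[ℂ] V (k - 1)) (Bup : ∀ k, V (k - 1) →ₗ[ℂ] V k)
    (i : W →ₗ[ℂ] V 1) (j : V 1 →ₗ[ℂ] W)
    (hij : i.comp j = (Bdown 2).comp (Bup 2))
    (hrel : ∀ l, 2 ≤ l → l ≤ n - 2 →
      (Bup l).comp (Bdown l) = (Bdown (l + 1)).comp (Bup (l + 1))) :
    ∀ l, 1 ≤ l → l ≤ n - 2 →
      (asc V Bup l).comp (i.comp j) = (Bdown (l + 1)).comp (asc V Bup (l + 1)) := by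
  intro l
  induction l with
  | zero => omega
  | succ m ih =>
    intro _ hle
    match m, ih with
    | 0, _ =>
      show (LinearMap.id : V 1 →ₗ[ℂ] V 1).comp (i.comp j)
          = (Bdown 2).comp ((Bup 2).comp LinearMap.id)
      simp [hij]
    | m + 1, ih =>
      have ih' := ih (by omega) (by omega)
      show (Bup (m + 2)).comp ((asc V Bup (m + 1)).comp (i.comp j))
          = (Bdown (m + 3)).comp ((Bup (m + 3)).comp (asc V Bup (m + 2)))
      rw [ih', ← LinearMap.comp_assoc, ← LinearMap.comp_assoc,
        hrel (m + 2) (by omega) (by omega)]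

/-- with `x = j ∘ i : W → W`, `F_l = ker (B_{l-1,l} ∘ ⋯ ∘ B_{1,2} ∘ i)`,
fix `2 ≤ k ≤ n-1` and a subspace `S ⊆ V k` with `S ⊆ ker B_{k,k-1} ∩ ker B_{k,k+1}`
(the second condition being vacuous for `k = n-1`, by the convention `B_{n-1,n} = 0`);
let `p : V k → V k ⧸ S` be the projection and
`F'_k = ker (p ∘ B_{k-1,k} ∘ ⋯ ∘ B_{1,2} ∘ i)`.  Then `F_k ⊆ F'_k ⊆ x⁻¹(F_{k-1})`. -/
theorem flag_subspace_between
    (n : ℕ) (hn : 2 ≤ n)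
    (W : Type*) [AddCommGroup W] [Module ℂ W]
    (Bdown : ∀ k, V k →ₗ[ℂ] V (k - 1)) (Bup : ∀ k, V (k - 1) →ₗ[ℂ] V k)
    (i : W →ₗ[ℂ] V 1) (j : V 1 →ₗ[ℂ] W)
    (hij : i.comp j = (Bdown 2).comp (Bup 2))
    (hrel : ∀ l, 2 ≤ l → l ≤ n - 2 →
      (Bup l).comp (Bdown l) = (Bdown (l + 1)).comp (Bup (l + 1))) :
    ∀ k, 2 ≤ k → k ≤ n - 1 → ∀ S : Submodule ℂ (V k),
      S ≤ LinearMap.ker (Bdown k) →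
      (k ≤ n - 2 → S ≤ LinearMap.ker (Bup (k + 1))) →
      LinearMap.ker ((asc V Bup k).comp i)
          ≤ LinearMap.ker (S.mkQ.comp ((asc V Bup k).comp i))
        ∧ LinearMap.ker (S.mkQ.comp ((asc V Bup k).comp i))
          ≤ Submodule.comap (j.comp i) (LinearMap.ker ((asc V Bup (k - 1)).comp i)) := by
  intro k hk2 hk S hS _hS2
  obtain ⟨m, rfl⟩ : ∃ m, k = m + 2 := ⟨k - 2, by omega⟩
  constructor
  · intro w hw
    simp only [LinearMap.mem_ker, LinearMap.comp_apply] at hw ⊢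
    simp [hw]
  · intro w hw
    simp only [LinearMap.mem_ker, LinearMap.comp_apply, Submodule.mkQ_apply,
      Submodule.Quotient.mk_eq_zero] at hw
    simp only [Submodule.mem_comap, LinearMap.mem_ker, LinearMap.comp_apply]
    have h := asc_comp_ij V n W Bdown Bup i j hij hrel (m + 1) (by omega) (by omega)
    have h' := congrArg (fun f => f (i w)) h
    simp only [LinearMap.comp_apply] at h'
    show asc V Bup (m + 1) (i (j (i w))) = 0
    rw [h']
    exact hS hw


end
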